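/- arXiv:1907.06265 — 2 statements merged into one kernel-verified Lean document; each statement's English description precedes it below -/
import Mathlib

section
/- For every m ≥ 1, every word w' ∈ {0,1,2}^(m−1), and all distinct letters i, j ∈ {0,1,2}, the integers b(w,j) constructed by the paper's algorithms satisfy b(w'i, j) + b(w'j, i) = 0, where w'i and w'j denote the words of length m obtained by appending the letter i (respectively j) to w'. (This is condition (2.3) of Theorem 2.4.) -/
/-- `φ`: reread the binary expansion of `n` in base 3, so that
`φ(0) = 0`, `φ(2n) = 3 φ(n)`, `φ(2n+1) = 3 φ(n) + 1`. -/
def phi (n : ℕ) : ℕ := Nat.ofDigits 3 (Nat.digits 2 n)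

/-- `bₙ = 3 φ(n)`. -/
def bseq (n : ℕ) : ℕ := 3 * phi n

/-- The value of a word read as a binary numeral (big-endian). -/
def binVal (w : List (Fin 3)) : ℕ := w.foldl (fun acc d => 2 * acc + d.val) 0

/-- The values assigned in case (1) of the algorithm to the word `0 :: wt`,
all of whose letters lie in `{0, 1}`:  with `n = 2^(m-1) - N(w)`, we set
`b(w,0) = bₙ`, `b(w,1) = -b_{n-1}`, `b(w,2) = 3 - bₙ + b_{n-1}`. -/
def caseOneVal (wt : List (Fin 3)) (j : Fin 3) : ℤ :=
  let n := 2 ^ wt.length - binVal wt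
  if j = 0 then (bseq n : ℤ)
  else if j = 1 then -(bseq (n - 1) : ℤ)
  else 3 - (bseq n : ℤ) + (bseq (n - 1) : ℤ)

/-- `bTail wt j = b(0 :: wt, j)`, the `b`-values on words beginning with the letter `0`,
defined by the recursion (1)–(3) of the paper's algorithms. -/
def bTail : List (Fin 3) → Fin 3 → ℤ
  | [], j => caseOneVal [] j
  | x :: w', j =>
    if ∀ d ∈ x :: w', d = 0 ∨ d = 1 then
      -- case (1), letters in {0,1}
      caseOneVal (x :: w') j
    else if ∀ d ∈ x :: w', d = 0 ∨ d = 2 then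
      -- case (1), letters in {0,2} (with some letter equal to 2): by the 1 ↔ 2 symmetry
      caseOneVal ((x :: w').map (Equiv.swap 1 2)) (Equiv.swap 1 2 j)
    else
      -- cases (2) and (3): drop the second letter of the word
      bTail w' j

/-- `b(w, j)` for an arbitrary word `w`, via the alphabet-symmetric extension
`b(σ ∘ w, σ j) = b(w, j)`. -/
def bVal : List (Fin 3) → Fin 3 → ℤ
  | [], _ => 0
  | i :: wt, j =>
    if i = 0 then bTail wt j
    else if i = 1 then bTail (wt.map (Equiv.swap 0 1)) (Equiv.swap 0 1 j)
    else bTail (wt.map (Equiv.swap 0 2)) (Equiv.swap 0 2 j)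

lemma phi_two_mul (n : ℕ) : phi (2*n) = 3 * phi n := by
  rcases Nat.eq_zero_or_pos n with h | h
  · simp [h, phi]
  · unfold phi
    rw [Nat.digits_def' (by norm_num : 1 < 2) (by omega)]
    simp [Nat.ofDigits_cons, Nat.mul_div_cancel_left, Nat.mul_mod_right]

lemma phi_odd (n : ℕ) : phi (2*n+1) = 3 * phi n + 1 := by
  unfold phi
  rw [Nat.digits_def' (by norm_num : 1 < 2) (by omega)]
  have h1 : (2*n+1) % 2 = 1 := by omega
  have h2 : (2*n+1) / 2 = n := by omega
  rw [h1, h2]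
  simp [Nat.ofDigits_cons]
  ring

lemma bseq_even (n : ℕ) : bseq (2*n) = 3 * bseq n := by
  unfold bseq; rw [phi_two_mul]

lemma bseq_odd (n : ℕ) : bseq (2*n+1) = 3 * bseq n + 3 := by
  unfold bseq; rw [phi_odd]; ring

lemma bseq_pow (s : ℕ) : bseq (2^s) = 3^(s+1) := by
  induction s with
  | zero => simp [bseq, phi]
  | succ s ih =>
    have : (2:ℕ)^(s+1) = 2 * 2^s := by ring
    rw [this, bseq_even, ih]; ring

lemma bseq_pow_sub_one (s : ℕ) : 2 * bseq (2^s - 1) + 3 = 3^(s+1) := by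
  induction s with
  | zero => simp [bseq, phi]
  | succ s ih =>
    have h : (2:ℕ)^(s+1) - 1 = 2 * (2^s - 1) + 1 := by
      have : (2:ℕ)^(s+1) = 2 * 2^s := by ring
      have := Nat.one_le_two_pow (n := s)
      omega
    rw [h, bseq_odd]
    have : (3:ℕ)^(s+1+1) = 3 * 3^(s+1) := by ring
    omega

lemma key_diff (k m : ℕ) (hm : m % 2 = 1) :
    2 * ((bseq (2^k * m) : ℤ) - bseq (2^k * m - 1)) = 3 * 3^k + 3 := by
  induction k with
  | zero =>
    have hq : m = 2 * (m/2) + 1 := by omega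
    rw [pow_zero, one_mul]
    rw [hq]
    have h2 : 2 * (m/2) + 1 - 1 = 2 * (m/2) := by omega
    rw [h2, bseq_odd, bseq_even]
    push_cast
    ring
  | succ k ih =>
    have hc : 1 ≤ 2^k * m := Nat.one_le_iff_ne_zero.2 (Nat.mul_ne_zero (by positivity) (by omega))
    have h1 : 2^(k+1) * m = 2 * (2^k * m) := by ring
    have h2 : 2^(k+1) * m - 1 = 2 * (2^k * m - 1) + 1 := by omega
    rw [h1]
    have h3 : 2 * (2^k * m) - 1 = 2 * (2^k * m - 1) + 1 := by omega
    rw [h3, bseq_even, bseq_odd]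
    push_cast
    push_cast at ih
    have hp : (3:ℤ)^(k+1) = 3*3^k := by ring
    linarith [ih]

lemma binVal_aux (l : List (Fin 3)) : ∀ acc : ℕ,
    l.foldl (fun a d => 2 * a + d.val) acc = acc * 2^l.length + binVal l := by
  induction l with
  | nil => intro acc; simp [binVal]
  | cons d l ih =>
    intro acc
    simp only [List.foldl_cons, List.length_cons]
    rw [ih]
    show _ = acc * 2 ^ (l.length + 1) + binVal (d :: l)
    have : binVal (d :: l) = (2 * 0 + d.val) * 2 ^ l.length + binVal l := by
      simpa [binVal, List.foldl_cons] using ih (2 * 0 + d.val)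
    rw [this]; ring

lemma binVal_cons (d : Fin 3) (l : List (Fin 3)) :
    binVal (d :: l) = d.val * 2^l.length + binVal l := by
  simpa [binVal, List.foldl_cons] using binVal_aux l (2 * 0 + d.val)

lemma binVal_append (a b : List (Fin 3)) :
    binVal (a ++ b) = binVal a * 2^b.length + binVal b := by
  simpa [binVal, List.foldl_append] using binVal_aux b (binVal a)

lemma binVal_singleton (d : Fin 3) : binVal [d] = d.val := by
  simp [binVal]

lemma binVal_snoc (w : List (Fin 3)) (d : Fin 3) :
    binVal (w ++ [d]) = 2 * binVal w + d.val := by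
  rw [binVal_append, binVal_singleton]; simp; ring

lemma binVal_replicate_zero (t : ℕ) : binVal (List.replicate t (0 : Fin 3)) = 0 := by
  induction t with
  | zero => simp [binVal]
  | succ t ih => rw [List.replicate_succ, binVal_cons, ih]; simp

lemma binVal_lt (w : List (Fin 3)) (h : ∀ d ∈ w, d = 0 ∨ d = 1) :
    binVal w < 2 ^ w.length := by
  induction w with
  | nil => simp [binVal]
  | cons d l ih =>
    rw [binVal_cons, List.length_cons]
    have hd : d.val ≤ 1 := by rcases h d (by simp) with h|h <;> simp [h]
    have := ih (fun x hx => h x (by simp [hx]))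
    have h2 : (2:ℕ)^(l.length + 1) = 2^l.length + 2^l.length := by ring
    nlinarith [Nat.one_le_two_pow (n := l.length)]

lemma binVal_zeros (w : List (Fin 3)) (h : ∀ d ∈ w, d = 0) : binVal w = 0 := by
  induction w with
  | nil => simp [binVal]
  | cons d l ih =>
    rw [binVal_cons, h d (by simp), ih (fun x hx => h x (by simp [hx]))]
    simp

-- swap lemmas
lemma s12_0 : Equiv.swap (1 : Fin 3) 2 0 = 0 := by decide
lemma s12_1 : Equiv.swap (1 : Fin 3) 2 1 = 2 := by decide
lemma s12_2 : Equiv.swap (1 : Fin 3) 2 2 = 1 := by decide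

lemma map_swap_zeros (w : List (Fin 3)) (h : ∀ d ∈ w, d = 0) :
    w.map (Equiv.swap 1 2) = w := by
  induction w with
  | nil => rfl
  | cons d l ih =>
    rw [List.map_cons, h d (by simp), s12_0, ih (fun x hx => h x (by simp [hx]))]

-- decomposition
lemma decomp (a : Fin 3) (ha : a ≠ 0) :
    ∀ w : List (Fin 3), a ∈ w → (∀ d ∈ w, d = 0 ∨ d = a) →
      ∃ u t, w = u ++ a :: List.replicate t 0 := by
  intro w
  induction w using List.reverseRecOn with
  | nil => intro h; simp at h
  | append_singleton l d ih =>
    intro hmem hall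
    rcases hall d (by simp) with hd | hd
    · have : a ∈ l := by
        rcases List.mem_append.1 hmem with h | h
        · exact h
        · simp at h; rw [h, hd] at ha; exact absurd rfl ha
      obtain ⟨u, t, hut⟩ := ih this (fun x hx => hall x (by simp [hx]))
      exact ⟨u, t + 1, by rw [hut, hd]; simp [List.replicate_succ']⟩
    · exact ⟨l, 0, by rw [hd]; simp⟩

-- caseOneVal unfolding
lemma c1_zero (w : List (Fin 3)) :
    caseOneVal w 0 = (bseq (2 ^ w.length - binVal w) : ℤ) := by
  simp [caseOneVal]

lemma c1_one (w : List (Fin 3)) :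
    caseOneVal w 1 = -(bseq (2 ^ w.length - binVal w - 1) : ℤ) := by
  simp [caseOneVal]

lemma c1_two (w : List (Fin 3)) :
    caseOneVal w 2 = 3 - (bseq (2 ^ w.length - binVal w) : ℤ)
      + (bseq (2 ^ w.length - binVal w - 1) : ℤ) := by
  simp [caseOneVal]

-- bTail unfolding
lemma bTail_c1 (w : List (Fin 3)) (h : ∀ d ∈ w, d = 0 ∨ d = 1) (j : Fin 3) :
    bTail w j = caseOneVal w j := by
  cases w with
  | nil => rfl
  | cons x w' => rw [bTail, if_pos h]

lemma bTail_c2 (w : List (Fin 3)) (hne : w ≠ [])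
    (h1 : ¬ ∀ d ∈ w, d = 0 ∨ d = 1) (h2 : ∀ d ∈ w, d = 0 ∨ d = 2) (j : Fin 3) :
    bTail w j = caseOneVal (w.map (Equiv.swap 1 2)) (Equiv.swap 1 2 j) := by
  cases w with
  | nil => exact absurd rfl hne
  | cons x w' => rw [bTail, if_neg h1, if_pos h2]

lemma bTail_rec (x : Fin 3) (w' : List (Fin 3))
    (h1 : ¬ ∀ d ∈ x :: w', d = 0 ∨ d = 1) (h2 : ¬ ∀ d ∈ x :: w', d = 0 ∨ d = 2)
    (j : Fin 3) : bTail (x :: w') j = bTail w' j := by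
  rw [bTail, if_neg h1, if_neg h2]

-- helpers
lemma all_snoc {P : Fin 3 → Prop} {wt : List (Fin 3)} {c : Fin 3}
    (h : ∀ d ∈ wt, P d) (hc : P c) : ∀ d ∈ wt ++ [c], P d := by
  intro d hd
  rcases List.mem_append.1 hd with h' | h'
  · exact h d h'
  · rw [List.mem_singleton.1 h']; exact hc

lemma not_all01_of_mem2 {w : List (Fin 3)} (h : (2 : Fin 3) ∈ w) :
    ¬ ∀ d ∈ w, d = 0 ∨ d = 1 := by
  intro hall
  rcases hall 2 h with h' | h' <;> exact absurd h' (by decide)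

lemma not_all02_of_mem1 {w : List (Fin 3)} (h : (1 : Fin 3) ∈ w) :
    ¬ ∀ d ∈ w, d = 0 ∨ d = 2 := by
  intro hall
  rcases hall 1 h with h' | h' <;> exact absurd h' (by decide)

-- arithmetic cores
lemma core_odd (n : ℕ) (hn : n % 2 = 1) : 3 - (bseq n : ℤ) + bseq (n - 1) = 0 := by
  obtain ⟨q, hq⟩ : ∃ q, n = 2 * q + 1 := ⟨n / 2, by omega⟩
  subst hq
  have h2 : 2 * q + 1 - 1 = 2 * q := by omega
  rw [h2, bseq_odd, bseq_even]
  push_cast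
  ring

lemma core_mixed (t n m : ℕ) (hm : m % 2 = 1) (hn : n = 2 ^ (t + 1) * m) :
    (3 - (bseq n : ℤ) + bseq (n - 1)) + bseq (2 ^ (t + 1) - 1) = 0 := by
  subst hn
  have h1 := key_diff (t + 1) m hm
  have h2 := bseq_pow_sub_one (t + 1)
  have h3 : (2:ℤ) * bseq (2 ^ (t + 1) - 1) + 3 = 3 ^ (t + 1 + 1) := by exact_mod_cast h2
  have h4 : (3 : ℤ) ^ (t + 1 + 1) = 3 * 3 ^ (t + 1) := by ring
  linarith

-- the recursion lemmas
lemma bTail_T (i : Fin 3) (u : List (Fin 3)) (t : ℕ) :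
    bTail (u ++ (1 : Fin 3) :: (List.replicate t 0 ++ [2])) i
      = caseOneVal (List.replicate t (0 : Fin 3) ++ [1]) (Equiv.swap 1 2 i) := by
  induction u with
  | nil =>
    simp only [List.nil_append]
    rw [bTail_rec _ _ (not_all01_of_mem2 (by simp)) (not_all02_of_mem1 (by simp))]
    rw [bTail_c2 _ (by simp) (not_all01_of_mem2 (by simp))
        (fun d hd => by
          rcases List.mem_append.1 hd with h' | h'
          · exact Or.inl (List.eq_of_mem_replicate h')
          · exact Or.inr (List.mem_singleton.1 h'))]
    congr 1
    rw [List.map_append, List.map_replicate, s12_0]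
    simp [s12_2]
  | cons a u ih =>
    rw [List.cons_append,
      bTail_rec _ _ (not_all01_of_mem2 (by simp)) (not_all02_of_mem1 (by simp)), ih]

lemma bTail_T2 (i : Fin 3) (u : List (Fin 3)) (t : ℕ) :
    bTail (u ++ (2 : Fin 3) :: (List.replicate t 0 ++ [1])) i
      = caseOneVal (List.replicate t (0 : Fin 3) ++ [1]) i := by
  induction u with
  | nil =>
    simp only [List.nil_append]
    rw [bTail_rec _ _ (not_all01_of_mem2 (by simp)) (not_all02_of_mem1 (by simp))]
    rw [bTail_c1 _ (fun d hd => by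
      rcases List.mem_append.1 hd with h' | h'
      · exact Or.inl (List.eq_of_mem_replicate h')
      · exact Or.inr (List.mem_singleton.1 h'))]
  | cons a u ih =>
    rw [List.cons_append,
      bTail_rec _ _ (not_all01_of_mem2 (by simp)) (not_all02_of_mem1 (by simp)), ih]

lemma binVal_nil : binVal ([] : List (Fin 3)) = 0 := rfl

lemma keyA01 (wt : List (Fin 3)) (h : ∀ d ∈ wt, d = 0 ∨ d = 1) :
    bTail (wt ++ [0]) 1 + bTail (wt ++ [1]) 0 = 0 := by
  have hN := binVal_lt wt h
  rw [bTail_c1 _ (all_snoc h (Or.inl rfl)), bTail_c1 _ (all_snoc h (Or.inr rfl)),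
    c1_one, c1_zero]
  simp only [List.length_append, List.length_cons, List.length_nil, binVal_snoc,
    Fin.val_zero, Fin.val_one]
  have e : 2 ^ (wt.length + (0 + 1)) = 2 * 2 ^ wt.length := by ring
  have harg : 2 ^ (wt.length + (0 + 1)) - (2 * binVal wt + 0) - 1
      = 2 ^ (wt.length + (0 + 1)) - (2 * binVal wt + 1) := by omega
  rw [harg]
  ring

lemma keyA02 (wt : List (Fin 3)) (h : ∀ d ∈ wt, d = 0 ∨ d = 1) :
    bTail (wt ++ [0]) 2 + bTail (wt ++ [2]) 0 = 0 := by
  by_cases h1 : (1 : Fin 3) ∈ wt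
  · -- wt contains a 1: decompose
    obtain ⟨u, t, hut⟩ := decomp 1 (by decide) wt h1 h
    have hu : ∀ d ∈ u, d = 0 ∨ d = 1 := fun d hd => h d (by rw [hut]; simp [hd])
    have hB := binVal_lt u hu
    rw [bTail_c1 _ (all_snoc h (Or.inl rfl)), c1_two]
    have hw2 : wt ++ [2] = u ++ (1 : Fin 3) :: (List.replicate t 0 ++ [2]) := by
      rw [hut]; simp
    rw [hw2, bTail_T, s12_0, c1_zero]
    rw [hut]
    simp only [List.length_append, List.length_cons, List.length_nil,
      List.length_replicate, binVal_snoc, binVal_append, binVal_cons,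
      binVal_replicate_zero, Fin.val_zero, Fin.val_one, binVal_nil]
    have e1 : 2 ^ (u.length + (t + 1) + (0 + 1)) = 2 ^ (t + 1) * (2 * 2 ^ u.length) := by
      ring
    have e2 : (binVal u * 2 ^ (t + 1) + (1 * 2 ^ t + 0)) * 2 ^ (0 + 1) + (0 * 2 ^ 0 + 0)
        = 2 ^ (t + 1) * (2 * binVal u + 1) := by ring
    have hA : 2 ^ (u.length + (t + 1) + (0 + 1)) -
        ((binVal u * 2 ^ (t + 1) + (1 * 2 ^ t + 0)) * 2 ^ (0 + 1) + (0 * 2 ^ 0 + 0))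
        = 2 ^ (t + 1) * (2 * 2 ^ u.length - (2 * binVal u + 1)) := by
      rw [e1, e2, ← Nat.mul_sub]
    have e3 : 2 ^ (t + (0 + 1)) - (0 * 2 ^ (0 + 1) + (1 * 2 ^ 0 + 0)) = 2 ^ (t + 1) - 1 := by
      norm_num
    rw [hA, e3]
    exact core_mixed t _ _ (by omega) rfl
  · have h0 : ∀ d ∈ wt, d = 0 := fun d hd => (h d hd).resolve_right (fun e => h1 (e ▸ hd))
    rw [bTail_c1 _ (all_snoc h (Or.inl rfl)),
        bTail_c2 _ (by simp) (not_all01_of_mem2 (by simp))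
          (all_snoc (fun d hd => Or.inl (h0 d hd)) (Or.inr rfl))]
    rw [List.map_append, map_swap_zeros wt h0]
    simp only [List.map_cons, List.map_nil, s12_2, s12_0]
    rw [c1_two, c1_zero]
    simp only [List.length_append, List.length_cons, List.length_nil, binVal_snoc,
      binVal_zeros wt h0, Fin.val_zero, Fin.val_one]
    have e : 2 ^ (wt.length + (0 + 1)) = 2 * 2 ^ wt.length := by ring
    have i1 : 2 ^ (wt.length + (0 + 1)) - (2 * 0 + 0) = 2 ^ (wt.length + (0 + 1)) := by omega
    have i3 : 2 ^ (wt.length + (0 + 1)) - (2 * 0 + 1) = 2 ^ (wt.length + (0 + 1)) - 1 := by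
      omega
    rw [i1, i3]
    have p1 : (bseq (2 ^ (wt.length + (0 + 1))) : ℤ) = 3 ^ (wt.length + (0 + 1) + 1) := by
      exact_mod_cast bseq_pow (wt.length + (0 + 1))
    have p2 : (2 : ℤ) * bseq (2 ^ (wt.length + (0 + 1)) - 1) + 3 = 3 ^ (wt.length + (0 + 1) + 1) := by
      exact_mod_cast bseq_pow_sub_one (wt.length + (0 + 1))
    linarith

lemma keyA12 (wt : List (Fin 3)) (h : ∀ d ∈ wt, d = 0 ∨ d = 1) :
    bTail (wt ++ [1]) 2 + bTail (wt ++ [2]) 1 = 0 := by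
  have hN := binVal_lt wt h
  have e : 2 ^ (wt.length + (0 + 1)) = 2 * 2 ^ wt.length := by ring
  have e0 : (2 : ℕ) ^ (0 + 1) = 2 := by norm_num
  have ez : (2 : ℕ) ^ 0 = 1 := by norm_num
  rw [bTail_c1 _ (all_snoc h (Or.inr rfl)), c1_two]
  by_cases h1 : (1 : Fin 3) ∈ wt
  · obtain ⟨u, t, hut⟩ := decomp 1 (by decide) wt h1 h
    have hw2 : wt ++ [2] = u ++ (1 : Fin 3) :: (List.replicate t 0 ++ [2]) := by
      rw [hut]; simp
    rw [hw2, bTail_T, s12_1, c1_two]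
    simp only [List.length_append, List.length_cons, List.length_nil,
      List.length_replicate, binVal_snoc, binVal_append, binVal_cons,
      binVal_replicate_zero, Fin.val_zero, Fin.val_one, binVal_nil]
    have et : (2 : ℕ) ^ (t + (0 + 1)) = 2 * 2 ^ t := by ring
    have ht := Nat.one_le_two_pow (n := t)
    have o1 := core_odd (2 ^ (wt.length + (0 + 1)) - (binVal wt * 2 ^ (0 + 1) + (1 * 2 ^ 0 + 0)))
      (by rw [e0, ez]; omega)
    have o2 := core_odd (2 ^ (t + (0 + 1)) - (0 * 2 ^ (0 + 1) + (1 * 2 ^ 0 + 0)))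
      (by rw [e0, ez]; omega)
    linarith
  · have h0 : ∀ d ∈ wt, d = 0 := fun d hd => (h d hd).resolve_right (fun e => h1 (e ▸ hd))
    rw [bTail_c2 _ (by simp) (not_all01_of_mem2 (by simp))
        (all_snoc (fun d hd => Or.inl (h0 d hd)) (Or.inr rfl))]
    rw [List.map_append, map_swap_zeros wt h0]
    simp only [List.map_cons, List.map_nil, s12_2, s12_1]
    rw [c1_two]
    simp only [List.length_append, List.length_cons, List.length_nil, binVal_snoc,
      binVal_zeros wt h0, Fin.val_zero, Fin.val_one]
    have o1 := core_odd (2 ^ (wt.length + (0 + 1)) - (2 * 0 + 1)) (by omega)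
    have o2 := core_odd (2 ^ (wt.length + (0 + 1)) - (2 * binVal wt + 1)) (by omega)
    linarith

lemma keyA (wt : List (Fin 3)) (h : ∀ d ∈ wt, d = 0 ∨ d = 1) (i j : Fin 3) (hij : i ≠ j) :
    bTail (wt ++ [i]) j + bTail (wt ++ [j]) i = 0 := by
  fin_cases i <;> fin_cases j <;>
    first
      | exact absurd rfl hij
      | exact keyA01 wt h
      | exact keyA02 wt h
      | exact keyA12 wt h
      | (rw [add_comm]
         first
           | exact keyA01 wt h
           | exact keyA02 wt h
           | exact keyA12 wt h)

lemma keyB01 (wt : List (Fin 3)) (h : ∀ d ∈ wt, d = 0 ∨ d = 2) (h2m : (2 : Fin 3) ∈ wt) :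
    bTail (wt ++ [0]) 1 + bTail (wt ++ [1]) 0 = 0 := by
  obtain ⟨u, t, hut⟩ := decomp 2 (by decide) wt h2m h
  have hu' : ∀ d ∈ u.map (Equiv.swap 1 2), d = 0 ∨ d = 1 := by
    intro d hd
    obtain ⟨x, hx, rfl⟩ := List.mem_map.1 hd
    rcases h x (by rw [hut]; simp [hx]) with h' | h' <;> rw [h']
    · exact Or.inl s12_0
    · exact Or.inr s12_2
  have hB := binVal_lt _ hu'
  rw [bTail_c2 _ (by simp) (not_all01_of_mem2 (by simp [hut]))
      (all_snoc h (Or.inl rfl)), s12_1]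
  have hw1 : wt ++ [1] = u ++ (2 : Fin 3) :: (List.replicate t 0 ++ [1]) := by
    rw [hut]; simp
  rw [hw1, bTail_T2, c1_zero, List.map_append, c1_two, hut]
  simp only [List.map_append, List.map_cons, List.map_nil, List.map_replicate,
    s12_0, s12_2, List.length_append, List.length_cons, List.length_nil,
    List.length_replicate, List.length_map, binVal_snoc, binVal_append, binVal_cons,
    binVal_replicate_zero, binVal_nil, Fin.val_zero, Fin.val_one]
  rw [List.length_map] at hB
  have e1 : 2 ^ (u.length + (t + 1) + (0 + 1)) = 2 ^ (t + 1) * (2 * 2 ^ u.length) := by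
    ring
  have e2 : (binVal (List.map (⇑(Equiv.swap 1 2)) u) * 2 ^ (t + 1) + (1 * 2 ^ t + 0)) * 2 ^ (0 + 1)
        + (0 * 2 ^ 0 + 0)
      = 2 ^ (t + 1) * (2 * binVal (List.map (⇑(Equiv.swap 1 2)) u) + 1) := by ring
  have hA : 2 ^ (u.length + (t + 1) + (0 + 1)) -
      ((binVal (List.map (⇑(Equiv.swap 1 2)) u) * 2 ^ (t + 1) + (1 * 2 ^ t + 0)) * 2 ^ (0 + 1) +
        (0 * 2 ^ 0 + 0))
      = 2 ^ (t + 1) * (2 * 2 ^ u.length - (2 * binVal (List.map (⇑(Equiv.swap 1 2)) u) + 1)) := by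
    rw [e1, e2, ← Nat.mul_sub]
  have e3 : 2 ^ (t + (0 + 1)) - (0 * 2 ^ (0 + 1) + (1 * 2 ^ 0 + 0)) = 2 ^ (t + 1) - 1 := by
    norm_num
  rw [hA, e3]
  exact core_mixed t _ _ (by omega) rfl

lemma keyB02 (wt : List (Fin 3)) (h : ∀ d ∈ wt, d = 0 ∨ d = 2) (h2m : (2 : Fin 3) ∈ wt) :
    bTail (wt ++ [0]) 2 + bTail (wt ++ [2]) 0 = 0 := by
  have hu' : ∀ d ∈ wt.map (Equiv.swap 1 2), d = 0 ∨ d = 1 := by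
    intro d hd
    obtain ⟨x, hx, rfl⟩ := List.mem_map.1 hd
    rcases h x hx with h' | h' <;> rw [h']
    · exact Or.inl s12_0
    · exact Or.inr s12_2
  have hN := binVal_lt _ hu'
  rw [List.length_map] at hN
  rw [bTail_c2 _ (by simp) (not_all01_of_mem2 (by simp [h2m]))
      (all_snoc h (Or.inl rfl)), s12_2,
    bTail_c2 _ (by simp) (not_all01_of_mem2 (by simp))
      (all_snoc h (Or.inr rfl)), s12_0]
  rw [List.map_append, List.map_append]
  simp only [List.map_cons, List.map_nil, s12_0, s12_2]
  rw [c1_one, c1_zero]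
  simp only [List.length_append, List.length_cons, List.length_nil, List.length_map,
    binVal_snoc, Fin.val_zero, Fin.val_one]
  have e : 2 ^ (wt.length + (0 + 1)) = 2 * 2 ^ wt.length := by ring
  have harg : 2 ^ (wt.length + (0 + 1)) - (2 * binVal (wt.map (Equiv.swap 1 2)) + 0) - 1
      = 2 ^ (wt.length + (0 + 1)) - (2 * binVal (wt.map (Equiv.swap 1 2)) + 1) := by omega
  rw [harg]
  ring

lemma keyB12 (wt : List (Fin 3)) (h : ∀ d ∈ wt, d = 0 ∨ d = 2) (h2m : (2 : Fin 3) ∈ wt) :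
    bTail (wt ++ [1]) 2 + bTail (wt ++ [2]) 1 = 0 := by
  obtain ⟨u, t, hut⟩ := decomp 2 (by decide) wt h2m h
  have hu' : ∀ d ∈ wt.map (Equiv.swap 1 2), d = 0 ∨ d = 1 := by
    intro d hd
    obtain ⟨x, hx, rfl⟩ := List.mem_map.1 hd
    rcases h x hx with h' | h' <;> rw [h']
    · exact Or.inl s12_0
    · exact Or.inr s12_2
  have hN := binVal_lt _ hu'
  rw [List.length_map] at hN
  have hw1 : wt ++ [1] = u ++ (2 : Fin 3) :: (List.replicate t 0 ++ [1]) := by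
    rw [hut]; simp
  rw [hw1, bTail_T2, c1_two,
    bTail_c2 _ (by simp) (not_all01_of_mem2 (by simp))
      (all_snoc h (Or.inr rfl)), s12_1]
  rw [List.map_append]
  simp only [List.map_cons, List.map_nil, s12_2]
  rw [c1_two]
  simp only [List.length_append, List.length_cons, List.length_nil, List.length_map,
    List.length_replicate, binVal_snoc, binVal_append, binVal_cons,
    binVal_replicate_zero, binVal_nil, Fin.val_zero, Fin.val_one]
  have e : 2 ^ (wt.length + (0 + 1)) = 2 * 2 ^ wt.length := by ring
  have e0 : (2 : ℕ) ^ (0 + 1) = 2 := by norm_num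
  have ez : (2 : ℕ) ^ 0 = 1 := by norm_num
  have et : (2 : ℕ) ^ (t + (0 + 1)) = 2 * 2 ^ t := by ring
  have ht := Nat.one_le_two_pow (n := t)
  have o1 := core_odd (2 ^ (t + (0 + 1)) - (0 * 2 ^ (0 + 1) + (1 * 2 ^ 0 + 0)))
    (by rw [e0, ez]; omega)
  have o2 := core_odd (2 ^ (wt.length + (0 + 1))
      - (binVal (wt.map (Equiv.swap 1 2)) * 2 ^ (0 + 1) + (1 * 2 ^ 0 + 0)))
    (by rw [e0, ez]; omega)
  linarith

lemma keyB (wt : List (Fin 3)) (h : ∀ d ∈ wt, d = 0 ∨ d = 2) (h2m : (2 : Fin 3) ∈ wt)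
    (i j : Fin 3) (hij : i ≠ j) :
    bTail (wt ++ [i]) j + bTail (wt ++ [j]) i = 0 := by
  fin_cases i <;> fin_cases j <;>
    first
      | exact absurd rfl hij
      | exact keyB01 wt h h2m
      | exact keyB02 wt h h2m
      | exact keyB12 wt h h2m
      | (rw [add_comm]
         first
           | exact keyB01 wt h h2m
           | exact keyB02 wt h h2m
           | exact keyB12 wt h h2m)

lemma key (wt : List (Fin 3)) (i j : Fin 3) (hij : i ≠ j) :
    bTail (wt ++ [i]) j + bTail (wt ++ [j]) i = 0 := by
  induction wt with
  | nil => exact keyA [] (by simp) i j hij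
  | cons x rest ih =>
    by_cases hA : ∀ d ∈ x :: rest, d = 0 ∨ d = 1
    · exact keyA _ hA i j hij
    · have h2 : (2 : Fin 3) ∈ x :: rest := by
        push_neg at hA
        obtain ⟨d, hd, hd0, hd1⟩ := hA
        have : d = 2 := by fin_cases d <;> simp_all
        exact this ▸ hd
      by_cases hB : ∀ d ∈ x :: rest, d = 0 ∨ d = 2
      · exact keyB _ hB h2 i j hij
      · have h1 : (1 : Fin 3) ∈ x :: rest := by
          push_neg at hB
          obtain ⟨d, hd, hd0, hd2⟩ := hB
          have : d = 1 := by fin_cases d <;> simp_all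
          exact this ▸ hd
        have m2 : ∀ c : Fin 3, (2 : Fin 3) ∈ x :: (rest ++ [c]) := fun c => by
          rw [← List.cons_append]; exact List.mem_append_left _ h2
        have m1 : ∀ c : Fin 3, (1 : Fin 3) ∈ x :: (rest ++ [c]) := fun c => by
          rw [← List.cons_append]; exact List.mem_append_left _ h1
        rw [List.cons_append, List.cons_append,
          bTail_rec _ _ (not_all01_of_mem2 (m2 i)) (not_all02_of_mem1 (m1 i)),
          bTail_rec _ _ (not_all01_of_mem2 (m2 j)) (not_all02_of_mem1 (m1 j))]
        exact ih

lemma s01_0 : Equiv.swap (0 : Fin 3) 1 0 = 1 := by decide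
lemma s01_1 : Equiv.swap (0 : Fin 3) 1 1 = 0 := by decide
lemma s01_2 : Equiv.swap (0 : Fin 3) 1 2 = 2 := by decide
lemma s02_0 : Equiv.swap (0 : Fin 3) 2 0 = 2 := by decide
lemma s02_1 : Equiv.swap (0 : Fin 3) 2 1 = 1 := by decide
lemma s02_2 : Equiv.swap (0 : Fin 3) 2 2 = 0 := by decide


/-- Condition (2.3) of Theorem 2.4: for every `m ≥ 1`, every word
`w' ∈ {0,1,2}^(m-1)`, and all distinct letters `i ≠ j`, we have
`b(w'i, j) + b(w'j, i) = 0`. -/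
theorem bVal_append_add_eq_zero (m : ℕ) (hm : 1 ≤ m) (w' : List (Fin 3))
    (hw : w'.length = m - 1) (i j : Fin 3) (hij : i ≠ j) :
    bVal (w' ++ [i]) j + bVal (w' ++ [j]) i = 0 := by
  clear hm hw
  cases w' with
  | nil =>
    have hb0 : bseq 0 = 0 := by simp [bseq, phi]
    have hb1 : bseq 1 = 3 := by
      have : Nat.digits 2 1 = [1] := by
        rw [Nat.digits_def' (by norm_num : 1 < 2) one_pos]
        norm_num
      simp [bseq, phi, this, Nat.ofDigits]
    fin_cases i <;> fin_cases j <;>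
      first
        | exact absurd rfl hij
        | simp_all [bVal, bTail, caseOneVal, binVal_nil,
            s01_0, s01_1, s01_2, s02_0, s02_1, s02_2, s12_0, s12_1, s12_2]
  | cons x wt =>
    simp only [List.cons_append]
    have hsym : ∀ σ : Equiv.Perm (Fin 3), σ i ≠ σ j := fun σ hh => hij (σ.injective hh)
    by_cases hx0 : x = 0
    · subst hx0
      simp only [bVal, if_pos rfl]
      exact key wt i j hij
    · by_cases hx1 : x = 1
      · subst hx1
        simp only [bVal, if_neg (by decide : (1 : Fin 3) ≠ 0), if_pos rfl, if_true,
          List.map_append, List.map_cons, List.map_nil]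
        exact key (wt.map (Equiv.swap 0 1)) _ _ (hsym (Equiv.swap 0 1))
      · have hx2 : x = 2 := by fin_cases x <;> simp_all
        subst hx2
        simp only [bVal, if_neg (by decide : (2 : Fin 3) ≠ 0),
          if_neg (by decide : (2 : Fin 3) ≠ 1), if_true, if_false,
          List.map_append, List.map_cons, List.map_nil]
        exact key (wt.map (Equiv.swap 0 2)) _ _ (hsym (Equiv.swap 0 2))
end

section
/- For every m ≥ 2, the integers b(w,j) constructed by the paper's algorithms satisfy b(0·1·2^(m−2), 2) = 0 and b(0·2·1^(m−2), 1) = 0, where 0·1·2^(m−2) denotes the word of length m consisting of a 0, then a 1, then m−2 copies of 2 (and symmetrically for the other word). (This is the vanishing claim at the vertex where the two lower thirds of a face intersect, established by induction in the proof of Theorem 2.4.) -/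
lemma foldl_ones (k a : ℕ) :
    (List.replicate k (1 : Fin 3)).foldl (fun acc d => 2 * acc + d.val) a
      = 2 ^ k * (a + 1) - 1 := by
  induction k generalizing a with
  | zero => simp
  | succ k ih =>
    rw [List.replicate_succ, List.foldl_cons, ih]
    congr 1
    show 2 ^ k * (2 * a + 1 + 1) = 2 ^ (k + 1) * (a + 1)
    ring

lemma binVal_one_ones (k : ℕ) : binVal (1 :: List.replicate k 1) = 2 ^ (k + 1) - 1 := by
  have h : binVal (1 :: List.replicate k 1)
      = (List.replicate k (1 : Fin 3)).foldl (fun acc d => 2 * acc + d.val) 1 := rfl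
  rw [h, foldl_ones]
  norm_num [pow_succ]

lemma caseOneVal_one_ones (k : ℕ) : caseOneVal (1 :: List.replicate k 1) 1 = 0 := by
  have h : 2 ^ (k + 1) - binVal (1 :: List.replicate k 1) = 1 := by
    rw [binVal_one_ones]
    have : 1 ≤ 2 ^ (k + 1) := Nat.one_le_two_pow
    omega
  simp [caseOneVal, List.length_replicate, h, bseq, phi]

/-- The vanishing claim at the vertex where the two lower thirds of a face meet
(proof of Theorem 2.4): for every `m ≥ 2`, `b(0·1·2^(m-2), 2) = 0` and
`b(0·2·1^(m-2), 1) = 0`. -/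
theorem bVal_lower_thirds_vertex (m : ℕ) (hm : 2 ≤ m) :
    bVal (0 :: 1 :: List.replicate (m - 2) 2) 2 = 0 ∧
      bVal (0 :: 2 :: List.replicate (m - 2) 1) 1 = 0 := by
  obtain ⟨k, rfl⟩ : ∃ k, m = k + 2 := ⟨m - 2, by omega⟩
  simp only [Nat.add_sub_cancel]
  have hb : ∀ wt j, bVal (0 :: wt) j = bTail wt j := fun _ _ => rfl
  constructor
  · rw [hb]
    cases k with
    | zero =>
      simp only [List.replicate]
      simp [bTail, caseOneVal, binVal, bseq, phi]
    | succ k =>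
      have h2 : ¬ ∀ d ∈ (1 : Fin 3) :: List.replicate (k+1) (2:Fin 3), d = 0 ∨ d = 1 := by
        intro h
        have := h 2 (by simp [List.replicate_succ])
        simp at this
      have h2' : ¬ ∀ d ∈ (1 : Fin 3) :: List.replicate (k+1) (2:Fin 3), d = 0 ∨ d = 2 := by
        intro h
        have := h 1 (by simp)
        simp at this
      rw [bTail, if_neg h2, if_neg h2']
      rw [show List.replicate (k+1) (2:Fin 3) = 2 :: List.replicate k 2 from List.replicate_succ ..]
      have hall : ∀ d ∈ (2 : Fin 3) :: List.replicate k (2:Fin 3), d = 0 ∨ d = 2 := by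
        intro d hd
        rcases List.mem_cons.1 hd with h | h
        · right; exact h
        · right; exact List.eq_of_mem_replicate h
      have hnall : ¬ ∀ d ∈ (2 : Fin 3) :: List.replicate k (2:Fin 3), d = 0 ∨ d = 1 := by
        intro h; have := h 2 (by simp); simp at this
      rw [bTail, if_neg hnall, if_pos hall]
      have hs : Equiv.swap (1 : Fin 3) 2 2 = 1 := by decide
      have hmap : ((2 : Fin 3) :: List.replicate k 2).map (Equiv.swap 1 2)
          = 1 :: List.replicate k 1 := by
        rw [List.map_cons, List.map_replicate, hs]
      rw [hmap, hs, caseOneVal_one_ones]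
  · rw [hb]
    cases k with
    | zero =>
      simp only [List.replicate]
      simp [bTail, caseOneVal, binVal, bseq, phi]
    | succ k =>
      have h1 : ¬ ∀ d ∈ (2 : Fin 3) :: List.replicate (k+1) (1:Fin 3), d = 0 ∨ d = 1 := by
        intro h
        have := h 2 (by simp)
        simp at this
      have h1' : ¬ ∀ d ∈ (2 : Fin 3) :: List.replicate (k+1) (1:Fin 3), d = 0 ∨ d = 2 := by
        intro h
        have := h 1 (by simp [List.replicate_succ])
        simp at this
      rw [bTail, if_neg h1, if_neg h1']
      rw [show List.replicate (k+1) (1:Fin 3) = 1 :: List.replicate k 1 from List.replicate_succ ..]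
      have hall : ∀ d ∈ (1 : Fin 3) :: List.replicate k (1:Fin 3), d = 0 ∨ d = 1 := by
        intro d hd
        rcases List.mem_cons.1 hd with h | h
        · right; exact h
        · right; exact List.eq_of_mem_replicate h
      rw [bTail, if_pos hall, caseOneVal_one_ones]
end
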